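/- Let H be a Hilbert space, v ∈ B(H) a unitary, and y, z ∈ B(H) with ‖y‖ ≤ 1 and ‖z‖ ≤ 1. If for all real t the matrix [[t·I, y],[z, t·v]] in M₂(B(H)) has norm at most √(1 + t²), then z = −v y*. -/

import Mathlib

open scoped InnerProductSpace RealInnerProductSpace


open ContinuousLinearMap in
/-- The block operator `[[a, b], [c, d]]` on the Hilbert space `H ⊕₂ H`,
realizing the canonical C*-norm on `M₂(B(H))`. -/
noncomputable def blockOp {H : Type*} [NormedAddCommGroup H] [InnerProductSpace ℂ H]
    (a b c d : H →L[ℂ] H) : WithLp 2 (H × H) →L[ℂ] WithLp 2 (H × H) :=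
  (((WithLp.prodContinuousLinearEquiv 2 ℂ H H).symm : H × H →L[ℂ] WithLp 2 (H × H)).comp
    ((a.comp (fst ℂ H H) + b.comp (snd ℂ H H)).prod
      (c.comp (fst ℂ H H) + d.comp (snd ℂ H H)))).comp
    ((WithLp.prodContinuousLinearEquiv 2 ℂ H H) : WithLp 2 (H × H) →L[ℂ] H × H)

/-- If `v ∈ B(H)` is unitary, `‖y‖, ‖z‖ ≤ 1`, and `‖[[t·I, y], [z, t·v]]‖ ≤ √(1 + t²)`
for all real `t`, then `z = -v y*`. -/
theorem stmt12 {H : Type*} [NormedAddCommGroup H] [InnerProductSpace ℂ H] [CompleteSpace H]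
    (v y z : H →L[ℂ] H) (hv : v ∈ unitary (H →L[ℂ] H)) (hy : ‖y‖ ≤ 1) (hz : ‖z‖ ≤ 1)
    (h : ∀ t : ℝ, ‖blockOp ((t : ℂ) • 1) y z ((t : ℂ) • v)‖ ≤ Real.sqrt (1 + t ^ 2)) :
    z = -(v * star y) := by
  have hvv : ∀ η : H, ‖v η‖ = ‖η‖ := fun η => v.norm_map_of_mem_unitary hv η
  -- key: the cross term vanishes
  have key : ∀ ξ η : H, Complex.re (⟪ξ, y η⟫_ℂ) + Complex.re (⟪z ξ, v η⟫_ℂ) = 0 := by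
    intro ξ η
    set c : ℝ := Complex.re (⟪ξ, y η⟫_ℂ) + Complex.re (⟪z ξ, v η⟫_ℂ) with hc
    have main : ∀ t : ℝ, 2 * t * c ≤ ‖ξ‖ ^ 2 + ‖η‖ ^ 2 - ‖y η‖ ^ 2 - ‖z ξ‖ ^ 2 := by
      intro t
      set x : WithLp 2 (H × H) := (WithLp.prodContinuousLinearEquiv 2 ℂ H H).symm (ξ, η) with hxdef
      have hx2 : ‖x‖ ^ 2 = ‖ξ‖ ^ 2 + ‖η‖ ^ 2 := by
        rw [WithLp.prod_norm_sq_eq_of_L2]; rfl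
      have hMx : ‖blockOp ((t : ℂ) • 1) y z ((t : ℂ) • v) x‖ ^ 2
          = ‖(t : ℂ) • ξ + y η‖ ^ 2 + ‖z ξ + (t : ℂ) • v η‖ ^ 2 := by
        rw [WithLp.prod_norm_sq_eq_of_L2]
        have h1 : (blockOp ((t : ℂ) • 1) y z ((t : ℂ) • v) x).fst = (t : ℂ) • ξ + y η := rfl
        have h2 : (blockOp ((t : ℂ) • 1) y z ((t : ℂ) • v) x).snd = z ξ + (t : ℂ) • v η := rfl
        rw [h1, h2]
      have hb : ‖blockOp ((t : ℂ) • 1) y z ((t : ℂ) • v) x‖ ^ 2 ≤ (1 + t ^ 2) * ‖x‖ ^ 2 := by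
        have h0 : ‖blockOp ((t : ℂ) • 1) y z ((t : ℂ) • v) x‖
            ≤ Real.sqrt (1 + t ^ 2) * ‖x‖ :=
          le_trans ((blockOp ((t : ℂ) • 1) y z ((t : ℂ) • v)).le_opNorm x)
            (by nlinarith [h t, norm_nonneg x, norm_nonneg (blockOp ((t : ℂ) • 1) y z ((t : ℂ) • v))])
        have hs : Real.sqrt (1 + t ^ 2) ^ 2 = 1 + t ^ 2 :=
          Real.sq_sqrt (by positivity)
        nlinarith [norm_nonneg (blockOp ((t : ℂ) • 1) y z ((t : ℂ) • v) x),
          Real.sqrt_nonneg (1 + t ^ 2), norm_nonneg x]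
      rw [hMx, hx2] at hb
      have e1 : ‖(t : ℂ) • ξ + y η‖ ^ 2
          = t ^ 2 * ‖ξ‖ ^ 2 + 2 * (t * Complex.re (⟪ξ, y η⟫_ℂ)) + ‖y η‖ ^ 2 := by
        rw [@norm_add_sq ℂ, inner_smul_left, norm_smul]
        simp only [Complex.norm_real, RCLike.re_to_complex, Complex.conj_ofReal,
          Complex.mul_re, Complex.ofReal_re, Complex.ofReal_im, Real.norm_eq_abs]
        rw [mul_pow, sq_abs]
        ring
      have e2 : ‖z ξ + (t : ℂ) • v η‖ ^ 2
          = ‖z ξ‖ ^ 2 + 2 * (t * Complex.re (⟪z ξ, v η⟫_ℂ)) + t ^ 2 * ‖η‖ ^ 2 := by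
        rw [@norm_add_sq ℂ, inner_smul_right, norm_smul, hvv]
        simp only [Complex.norm_real, RCLike.re_to_complex,
          Complex.mul_re, Complex.ofReal_re, Complex.ofReal_im, Real.norm_eq_abs]
        rw [mul_pow, sq_abs]
        ring
      rw [e1, e2] at hb
      rw [hc]
      nlinarith [hb]
    by_contra hne
    set D : ℝ := ‖ξ‖ ^ 2 + ‖η‖ ^ 2 - ‖y η‖ ^ 2 - ‖z ξ‖ ^ 2 with hD
    have h1 := main ((D + 1) / (2 * c))
    have h2 : 2 * ((D + 1) / (2 * c)) * c = D + 1 := by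
      field_simp
    rw [h2] at h1
    linarith
  -- upgrade to full inner product and operator equality
  have key2 : ∀ ξ η : H, ⟪(star y + star v * z) ξ, η⟫_ℂ = 0 := by
    intro ξ η
    have hre : ∀ η : H, Complex.re (⟪(star y + star v * z) ξ, η⟫_ℂ) = 0 := by
      intro η
      rw [ContinuousLinearMap.star_eq_adjoint, ContinuousLinearMap.star_eq_adjoint]
      simp only [ContinuousLinearMap.add_apply, ContinuousLinearMap.mul_apply, inner_add_left,
        ContinuousLinearMap.adjoint_inner_left, Complex.add_re]
      exact key ξ η
    have him : (⟪(star y + star v * z) ξ, η⟫_ℂ).im = 0 := by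
      have := hre ((Complex.I : ℂ) • η)
      rw [inner_smul_right] at this
      simp only [Complex.mul_re, Complex.I_re, Complex.I_im] at this
      linarith
    exact Complex.ext (by simpa using hre η) (by simpa using him)
  have hw : (star y + star v * z) = 0 := by
    ext ξ
    have := key2 ξ ((star y + star v * z) ξ)
    rw [inner_self_eq_zero] at this
    simpa using this
  have hvz : star v * z = -star y := eq_neg_of_add_eq_zero_right hw
  rw [Unitary.mem_iff] at hv
  calc z = (v * star v) * z := by rw [hv.2, one_mul]
    _ = v * (star v * z) := by rw [mul_assoc]
    _ = -(v * star y) := by rw [hvz, mul_neg]
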